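/- Suppose the regularizer vanishes (Ω(β) = 0) and the constant function 1 lies in the linear span of the basis functions φ₁, …, φ_m. Then the optimal value of the constrained problem (P1') is at most the optimal value of the unconstrained centered problem (P2'): if β₁ minimizes G₁(β) = Σ_{i=1}^n ( y_i − Σ_j Σ_k β_{jk} φ_k(X_{ij}) )² over all β satisfying the centering constraints Σ_i Σ_k β_{jk} φ_k(X_{ij}) = 0 for every j, and β₂ minimizes G₂(β) = Σ_{i=1}^n ( y_i − Σ_j Σ_k β_{jk} ψ_{jk}(X_{ij}) )² over all β, then G₁(β₁) ≤ G₂(β₂). -/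

import Mathlib

/-- With no regularizer and assuming the constant function 1 lies
in the span of the basis, the optimal value of the constrained problem (P1')
is at most the optimal value of the unconstrained centered problem (P2'). -/
theorem stmt_6 (n p m : ℕ) (hn : 0 < n)
    (X : Fin n → Fin p → ℝ) (y : Fin n → ℝ) (φ : Fin m → ℝ → ℝ)
    (c : Fin m → ℝ) (hc : ∀ x : ℝ, ∑ k, c k * φ k x = 1)
    (β₁ β₂ : Fin p → Fin m → ℝ)
    (hfeas : ∀ j : Fin p, ∑ i, ∑ k, β₁ j k * φ k (X i j) = 0)
    (hmin₁ : ∀ β : Fin p → Fin m → ℝ,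
      (∀ j : Fin p, ∑ i, ∑ k, β j k * φ k (X i j) = 0) →
      ∑ i, (y i - ∑ j, ∑ k, β₁ j k * φ k (X i j)) ^ 2 ≤
      ∑ i, (y i - ∑ j, ∑ k, β j k * φ k (X i j)) ^ 2)
    (hmin₂ : ∀ β : Fin p → Fin m → ℝ,
      ∑ i, (y i - ∑ j, ∑ k, β₂ j k *
          (φ k (X i j) - (1 / (n : ℝ)) * ∑ i', φ k (X i' j))) ^ 2 ≤
      ∑ i, (y i - ∑ j, ∑ k, β j k *
          (φ k (X i j) - (1 / (n : ℝ)) * ∑ i', φ k (X i' j))) ^ 2) :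
    ∑ i, (y i - ∑ j, ∑ k, β₁ j k * φ k (X i j)) ^ 2 ≤
    ∑ i, (y i - ∑ j, ∑ k, β₂ j k *
        (φ k (X i j) - (1 / (n : ℝ)) * ∑ i', φ k (X i' j))) ^ 2 := by
  have hn' : (n : ℝ) ≠ 0 := Nat.cast_ne_zero.mpr hn.ne'
  set d : Fin p → ℝ := fun j => ∑ k, β₂ j k * ((1 / (n : ℝ)) * ∑ i', φ k (X i' j))
    with hd
  set β : Fin p → Fin m → ℝ := fun j k => β₂ j k - d j * c k with hβ
  -- key pointwise identity
  have key : ∀ (i : Fin n) (j : Fin p),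
      ∑ k, β j k * φ k (X i j) =
      ∑ k, β₂ j k * (φ k (X i j) - (1 / (n : ℝ)) * ∑ i', φ k (X i' j)) := by
    intro i j
    have h1 : ∑ k, d j * c k * φ k (X i j) = d j := by
      simp only [mul_assoc]
      rw [← Finset.mul_sum, hc (X i j), mul_one]
    calc ∑ k, β j k * φ k (X i j)
        = ∑ k, (β₂ j k * φ k (X i j) - d j * c k * φ k (X i j)) := by
          apply Finset.sum_congr rfl; intro k _; simp [hβ]; ring
      _ = (∑ k, β₂ j k * φ k (X i j)) - d j := by
          rw [Finset.sum_sub_distrib, h1]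
      _ = ∑ k, β₂ j k * (φ k (X i j) - (1 / (n : ℝ)) * ∑ i', φ k (X i' j)) := by
          rw [hd]; rw [← Finset.sum_sub_distrib]
          apply Finset.sum_congr rfl; intro k _; ring
  -- feasibility of β
  have hfeasβ : ∀ j : Fin p, ∑ i, ∑ k, β j k * φ k (X i j) = 0 := by
    intro j
    have : ∀ i : Fin n, ∑ k, β j k * φ k (X i j) =
        ∑ k, β₂ j k * (φ k (X i j) - (1 / (n : ℝ)) * ∑ i', φ k (X i' j)) :=
      fun i => key i j
    rw [Finset.sum_congr rfl (fun i _ => this i), Finset.sum_comm]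
    apply Finset.sum_eq_zero
    intro k _
    rw [← Finset.mul_sum, Finset.sum_sub_distrib, Finset.sum_const,
      Finset.card_univ, Fintype.card_fin, nsmul_eq_mul]
    field_simp
    rw [sub_self, mul_zero]
  calc ∑ i, (y i - ∑ j, ∑ k, β₁ j k * φ k (X i j)) ^ 2
      ≤ ∑ i, (y i - ∑ j, ∑ k, β j k * φ k (X i j)) ^ 2 := hmin₁ β hfeasβ
    _ = ∑ i, (y i - ∑ j, ∑ k, β₂ j k *
          (φ k (X i j) - (1 / (n : ℝ)) * ∑ i', φ k (X i' j))) ^ 2 := by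
        apply Finset.sum_congr rfl; intro i _
        congr 1
        rw [sub_right_inj]
        exact Finset.sum_congr rfl fun j _ => key i j
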